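/- Let H be a finite simple graph with maximum degree at most 3, and let u, v be adjacent vertices both of degree 2 in H. Then H is 3-edge-colorable if and only if H − u − v is 3-edge-colorable. -/

import Mathlib

/-- `H` is `k`-edge-colorable iff its line graph is `k`-vertex-colorable. -/
def SimpleGraph.EdgeColorable {V : Type*} (H : SimpleGraph V) (k : ℕ) : Prop :=
  H.lineGraph.Colorable k

open SimpleGraph Finset

lemma Sym2.mem_attachWith' {α : Type*} {P : α → Prop} {s : Sym2 α} (h : ∀ a ∈ s, P a)
    {x : α} (hx : x ∈ s) (p : P x) : (⟨x, p⟩ : {a // P a}) ∈ s.attachWith h := by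
  induction' s with y z
  rw [Sym2.mem_iff] at hx
  unfold Sym2.attachWith
  rw [Sym2.pmap_pair, Sym2.mem_iff]
  rcases hx with rfl | rfl
  · exact Or.inl (Subtype.ext rfl)
  · exact Or.inr (Subtype.ext rfl)

/-- An embedding of graphs induces a homomorphism of line graphs. -/
def lineGraphHomOfEmbedding {V W : Type*} {G : SimpleGraph V} {H : SimpleGraph W}
    (f : G ↪g H) : G.lineGraph →g H.lineGraph where
  toFun := f.mapEdgeSet
  map_rel' := by
    intro e₁ e₂ h
    rw [SimpleGraph.lineGraph_adj_iff_exists] at h ⊢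
    obtain ⟨hne, w, hw1, hw2⟩ := h
    refine ⟨fun hc => hne (f.mapEdgeSet.injective hc), f w, ?_, ?_⟩
    · show f w ∈ Sym2.map f e₁.val
      exact Sym2.mem_map.mpr ⟨w, hw1, rfl⟩
    · show f w ∈ Sym2.map f e₂.val
      exact Sym2.mem_map.mpr ⟨w, hw2, rfl⟩

lemma mem_induce_edgeSet {V : Type*} {H : SimpleGraph V} {S : Set V} (f : Sym2 ↑S) :
    f ∈ (H.induce S).edgeSet ↔ f.map Subtype.val ∈ H.edgeSet := by
  induction' f with x y
  simp [Sym2.map_pair_eq]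

lemma fin3_pick (T : Finset (Fin 3)) (hT : T.card ≤ 2) : ∃ x, x ∉ T := by
  by_contra h
  push_neg at h
  have : (Finset.univ : Finset (Fin 3)) ⊆ T := fun x _ => h x
  have := Finset.card_le_card this
  simp at this
  omega

lemma other_neighbor {V : Type*} [Fintype V] [DecidableEq V] {H : SimpleGraph V}
    [DecidableRel H.Adj] {u v : V} (h : H.Adj u v) (hd : H.degree u = 2) :
    ∃ a, a ≠ v ∧ H.Adj u a ∧ ∀ w, H.Adj u w → w = v ∨ w = a := by
  rw [← SimpleGraph.card_neighborFinset_eq_degree] at hd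
  obtain ⟨x, y, hxy, hset⟩ := Finset.card_eq_two.mp hd
  have hv : v ∈ H.neighborFinset u := by simpa using h
  rw [hset] at hv
  simp only [Finset.mem_insert, Finset.mem_singleton] at hv
  rcases hv with rfl | rfl
  · refine ⟨y, hxy.symm, ?_, ?_⟩
    · have : y ∈ H.neighborFinset u := by rw [hset]; simp
      simpa using this
    · intro w hw
      have : w ∈ H.neighborFinset u := by simpa using hw
      rw [hset] at this
      simpa using this
  · refine ⟨x, hxy, ?_, ?_⟩
    · have : x ∈ H.neighborFinset u := by rw [hset]; simp
      simpa using this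
    · intro w hw
      have : w ∈ H.neighborFinset u := by simpa using hw
      rw [hset] at this
      rw [Finset.mem_insert, Finset.mem_singleton] at this
      tauto

/-- Reduction 2: deleting two adjacent vertices of degree 2 does not change
3-edge-colorability. -/
theorem stmt6 {V : Type*} [Fintype V] [DecidableEq V] (H : SimpleGraph V)
    [DecidableRel H.Adj] (hmax : ∀ w, H.degree w ≤ 3) (u v : V) (huv : H.Adj u v)
    (hu : H.degree u = 2) (hv : H.degree v = 2) :
    H.EdgeColorable 3 ↔ (H.induce {w | w ≠ u ∧ w ≠ v}).EdgeColorable 3 := by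
  classical
  set S : Set V := {w | w ≠ u ∧ w ≠ v} with hSdef
  constructor
  · rintro ⟨C⟩
    exact ⟨C.comp (lineGraphHomOfEmbedding (SimpleGraph.Embedding.induce S))⟩
  · rintro ⟨c⟩
    -- the other neighbors of u and v
    obtain ⟨a, hav, hua, huw⟩ := other_neighbor huv hu
    obtain ⟨b, hbu, hvb, hvw⟩ := other_neighbor huv.symm hv
    have hau : a ≠ u := fun h => H.loopless.irrefl u (h ▸ hua)
    have hbv : b ≠ v := fun h => H.loopless.irrefl v (h ▸ hvb)
    have haS : a ∈ S := ⟨hau, hav⟩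
    have hbS : b ∈ S := ⟨hbu, hbv⟩
    set G : SimpleGraph ↑S := H.induce S with hGdef
    -- lifting edges avoiding u and v to edges of G
    have liftmem : ∀ (e : H.edgeSet) (h1 : u ∉ e.val) (h2 : v ∉ e.val),
        e.val.attachWith (fun x hx => (⟨fun h => h1 (h ▸ hx), fun h => h2 (h ▸ hx)⟩ : x ∈ S))
          ∈ G.edgeSet := by
      intro e h1 h2
      rw [mem_induce_edgeSet, Sym2.attachWith_map_subtypeVal]
      exact e.2
    let lift : ∀ (e : H.edgeSet), u ∉ e.val → v ∉ e.val → G.edgeSet :=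
      fun e h1 h2 => ⟨_, liftmem e h1 h2⟩
    -- colors present at a vertex of G
    let colorsAt : ↑S → Finset (Fin 3) :=
      fun w => Finset.image c (Finset.univ.filter (fun e : G.edgeSet => w ∈ (e : Sym2 ↑S)))
    have colorsAt_card : ∀ w : ↑S, (colorsAt w).card ≤ G.degree w := by
      intro w
      refine le_trans (Finset.card_image_le) (le_of_eq ?_)
      rw [← SimpleGraph.card_incidenceFinset_eq_degree]
      refine Finset.card_bij (fun e _ => (e : Sym2 ↑S)) ?_ ?_ ?_
      · intro e he
        simp only [Finset.mem_filter] at he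
        rw [SimpleGraph.mem_incidenceFinset]
        exact ⟨e.2, he.2⟩
      · intro e₁ h₁ e₂ h₂ h
        exact Subtype.ext h
      · intro f hf
        rw [SimpleGraph.mem_incidenceFinset] at hf
        exact ⟨⟨f, hf.1⟩, by simp [hf.2], rfl⟩
    -- degree bounds in G
    have degBound : ∀ (w : V) (hw : w ∈ S) (X : Finset V), X ⊆ H.neighborFinset w →
        (∀ x ∈ X, x ∉ S) → G.degree ⟨w, hw⟩ ≤ H.degree w - X.card := by
      intro w hw X hX hXS
      have h1 : (H.neighborFinset w \ X).card = H.degree w - X.card := by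
        rw [Finset.card_sdiff_of_subset hX, SimpleGraph.card_neighborFinset_eq_degree]
      rw [← h1, ← SimpleGraph.card_neighborFinset_eq_degree]
      refine Finset.card_le_card_of_injOn (fun x => (x : V)) ?_ ?_
      · intro x hx
        simp only [Finset.mem_coe, SimpleGraph.mem_neighborFinset] at hx
        have hadj : H.Adj w (x : V) := hx
        simp only [Finset.mem_coe, Finset.mem_sdiff, SimpleGraph.mem_neighborFinset]
        exact ⟨hadj, fun hc => hXS _ hc x.2⟩
      · intro x _ y _ h
        exact Subtype.ext h
    have hdegA : G.degree ⟨a, haS⟩ ≤ 2 := by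
      have := degBound a haS {u} (by simp [SimpleGraph.mem_neighborFinset, hua.symm])
        (by intro x hx; simp at hx; subst hx; exact fun h => h.1 rfl)
      simp only [Finset.card_singleton] at this
      have h3 := hmax a
      omega
    have hdegB : G.degree ⟨b, hbS⟩ ≤ 2 := by
      have := degBound b hbS {v} (by simp [SimpleGraph.mem_neighborFinset, hvb.symm])
        (by intro x hx; simp at hx; subst hx; exact fun h => h.2 rfl)
      simp only [Finset.card_singleton] at this
      have h3 := hmax b
      omega
    have hdegA' : a = b → G.degree ⟨a, haS⟩ ≤ 1 := by
      intro hab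
      have := degBound a haS {u, v}
        (by
          intro x hx
          simp only [Finset.mem_insert, Finset.mem_singleton] at hx
          rcases hx with rfl | rfl
          · simp [SimpleGraph.mem_neighborFinset, hua.symm]
          · subst hab; simp [SimpleGraph.mem_neighborFinset, hvb.symm])
        (by
          intro x hx
          simp only [Finset.mem_insert, Finset.mem_singleton] at hx
          rcases hx with rfl | rfl
          · exact fun h => h.1 rfl
          · exact fun h => h.2 rfl)
      have hcard : ({u, v} : Finset V).card = 2 := by
        rw [Finset.card_insert_of_notMem (by simpa using huv.ne), Finset.card_singleton]
      rw [hcard] at this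
      have h3 := hmax a
      omega
    -- pick the three new colors
    obtain ⟨α, hα⟩ := fin3_pick (colorsAt ⟨a, haS⟩) (le_trans (colorsAt_card _) hdegA)
    obtain ⟨β, hβ⟩ := fin3_pick (colorsAt ⟨b, hbS⟩ ∪ (if a = b then {α} else ∅))
      (by
        rcases eq_or_ne a b with hab | hab
        · subst hab
          rw [if_pos rfl]
          have h1 : (colorsAt ⟨a, hbS⟩).card ≤ 1 :=
            le_trans (colorsAt_card ⟨a, hbS⟩) (hdegA' rfl)
          have h2 := Finset.card_union_le (colorsAt ⟨a, hbS⟩) ({α} : Finset (Fin 3))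
          simp only [Finset.card_singleton] at h2
          omega
        · rw [if_neg hab, Finset.union_empty]
          exact le_trans (colorsAt_card _) hdegB)
    obtain ⟨γ, hγ⟩ := fin3_pick {α, β} (Finset.card_insert_le _ _ |>.trans (by simp))
    have hβb : β ∉ colorsAt ⟨b, hbS⟩ := fun h => hβ (Finset.mem_union_left _ h)
    have hβα : a = b → β ≠ α := by
      intro hab h
      exact hβ (Finset.mem_union_right _ (by simp [if_pos hab, h]))
    have hγα : γ ≠ α := fun h => hγ (by simp [h])
    have hγβ : γ ≠ β := fun h => hγ (by simp [h])
    -- identification of the three special edges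
    have eUV : ∀ e : H.edgeSet, u ∈ e.val → v ∈ e.val → e.val = s(u, v) := by
      intro e h1 h2
      exact (Sym2.mem_and_mem_iff huv.ne).mp ⟨h1, h2⟩
    have eU : ∀ e : H.edgeSet, u ∈ e.val → v ∉ e.val → e.val = s(u, a) := by
      intro e h1 h2
      obtain ⟨y, hy⟩ := Sym2.mem_iff_exists.mp h1
      have hadj : H.Adj u y := by
        have := e.2
        rw [hy] at this
        exact this
      rcases huw y hadj with rfl | rfl
      · exact absurd (by rw [hy]; simp) h2
      · exact hy
    have eV : ∀ e : H.edgeSet, v ∈ e.val → u ∉ e.val → e.val = s(v, b) := by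
      intro e h1 h2
      obtain ⟨y, hy⟩ := Sym2.mem_iff_exists.mp h1
      have hadj : H.Adj v y := by
        have := e.2
        rw [hy] at this
        exact this
      rcases hvw y hadj with rfl | rfl
      · exact absurd (by rw [hy]; simp) h2
      · exact hy
    -- membership of lifted colors in colorsAt
    have memColors : ∀ (e : H.edgeSet) (h1 : u ∉ e.val) (h2 : v ∉ e.val) (w : V) (hw : w ∈ S),
        w ∈ e.val → c (lift e h1 h2) ∈ colorsAt ⟨w, hw⟩ := by
      intro e h1 h2 w hw hwe
      apply Finset.mem_image_of_mem
      rw [Finset.mem_filter]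
      refine ⟨Finset.mem_univ _, ?_⟩
      exact Sym2.mem_attachWith' _ hwe hw
    have liftInj : ∀ (e₁ e₂ : H.edgeSet) (h1 h2 h3 h4), e₁ ≠ e₂ →
        lift e₁ h1 h2 ≠ lift e₂ h3 h4 := by
      intro e₁ e₂ h1 h2 h3 h4 hne hc
      apply hne
      apply Subtype.ext
      have : (lift e₁ h1 h2).val.map Subtype.val = (lift e₂ h3 h4).val.map Subtype.val := by
        rw [hc]
      rwa [Sym2.attachWith_map_subtypeVal, Sym2.attachWith_map_subtypeVal] at this
    refine ⟨SimpleGraph.Coloring.mk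
      (fun e => if h1 : u ∈ e.val then (if v ∈ e.val then γ else α)
        else if h2 : v ∈ e.val then β else c (lift e h1 h2)) ?_⟩
    intro e₁ e₂ hadj
    rw [SimpleGraph.lineGraph_adj_iff_exists] at hadj
    obtain ⟨hne, w, hw1, hw2⟩ := hadj
    by_cases hu1 : u ∈ e₁.val <;> by_cases hv1 : v ∈ e₁.val <;>
      by_cases hu2 : u ∈ e₂.val <;> by_cases hv2 : v ∈ e₂.val
    -- (UV, UV)
    · simp only [dif_pos hu1, if_pos hv1, dif_pos hu2, if_pos hv2]
      exact absurd (Subtype.ext ((eUV e₁ hu1 hv1).trans (eUV e₂ hu2 hv2).symm)) hne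
    -- (UV, U)
    · simp only [dif_pos hu1, if_pos hv1, dif_pos hu2, if_neg hv2]
      exact hγα
    -- (UV, V)
    · simp only [dif_pos hu1, if_pos hv1, dif_neg hu2, dif_pos hv2]
      exact hγβ
    -- (UV, O)
    · exfalso
      rw [eUV e₁ hu1 hv1, Sym2.mem_iff] at hw1
      rcases hw1 with rfl | rfl
      · exact hu2 hw2
      · exact hv2 hw2
    -- (U, UV)
    · simp only [dif_pos hu1, if_neg hv1, dif_pos hu2, if_pos hv2]
      exact fun h => hγα h.symm
    -- (U, U)
    · simp only [dif_pos hu1, if_neg hv1, dif_pos hu2, if_neg hv2]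
      exact absurd (Subtype.ext ((eU e₁ hu1 hv1).trans (eU e₂ hu2 hv2).symm)) hne
    -- (U, V)
    · simp only [dif_pos hu1, if_neg hv1, dif_neg hu2, dif_pos hv2]
      rw [eU e₁ hu1 hv1, Sym2.mem_iff] at hw1
      rcases hw1 with rfl | rfl
      · exact absurd hw2 hu2
      · rw [eV e₂ hv2 hu2, Sym2.mem_iff] at hw2
        rcases hw2 with rfl | hab
        · exact absurd rfl hav
        · exact (hβα hab).symm
    -- (U, O)
    · simp only [dif_pos hu1, if_neg hv1, dif_neg hu2, dif_neg hv2]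
      rw [eU e₁ hu1 hv1, Sym2.mem_iff] at hw1
      rcases hw1 with rfl | rfl
      · exact absurd hw2 hu2
      · exact fun h => hα (by rw [h]; exact memColors e₂ hu2 hv2 w haS hw2)
    -- (V, UV)
    · simp only [dif_neg hu1, dif_pos hv1, dif_pos hu2, if_pos hv2]
      exact fun h => hγβ h.symm
    -- (V, U)
    · simp only [dif_neg hu1, dif_pos hv1, dif_pos hu2, if_neg hv2]
      rw [eV e₁ hv1 hu1, Sym2.mem_iff] at hw1
      rcases hw1 with rfl | rfl
      · exact absurd hw2 hv2
      · rw [eU e₂ hu2 hv2, Sym2.mem_iff] at hw2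
        rcases hw2 with rfl | hab
        · exact absurd rfl hbu
        · exact hβα hab.symm
    -- (V, V)
    · simp only [dif_neg hu1, dif_pos hv1, dif_neg hu2, dif_pos hv2]
      exact absurd (Subtype.ext ((eV e₁ hv1 hu1).trans (eV e₂ hv2 hu2).symm)) hne
    -- (V, O)
    · simp only [dif_neg hu1, dif_pos hv1, dif_neg hu2, dif_neg hv2]
      rw [eV e₁ hv1 hu1, Sym2.mem_iff] at hw1
      rcases hw1 with rfl | rfl
      · exact absurd hw2 hv2
      · exact fun h => hβb (by rw [h]; exact memColors e₂ hu2 hv2 w hbS hw2)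
    -- (O, UV)
    · exfalso
      rw [eUV e₂ hu2 hv2, Sym2.mem_iff] at hw2
      rcases hw2 with rfl | rfl
      · exact hu1 hw1
      · exact hv1 hw1
    -- (O, U)
    · simp only [dif_neg hu1, dif_neg hv1, dif_pos hu2, if_neg hv2]
      rw [eU e₂ hu2 hv2, Sym2.mem_iff] at hw2
      rcases hw2 with rfl | rfl
      · exact absurd hw1 hu1
      · exact fun h => hα (by rw [← h]; exact memColors e₁ hu1 hv1 w haS hw1)
    -- (O, V)
    · simp only [dif_neg hu1, dif_neg hv1, dif_neg hu2, dif_pos hv2]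
      rw [eV e₂ hv2 hu2, Sym2.mem_iff] at hw2
      rcases hw2 with rfl | rfl
      · exact absurd hw1 hv1
      · exact fun h => hβb (by rw [← h]; exact memColors e₁ hu1 hv1 w hbS hw1)
    -- (O, O)
    · simp only [dif_neg hu1, dif_neg hv1, dif_neg hu2, dif_neg hv2]
      have hwS : w ∈ S := ⟨fun h => hu1 (h ▸ hw1), fun h => hv1 (h ▸ hw1)⟩
      exact c.valid (SimpleGraph.lineGraph_adj_iff_exists.mpr
        ⟨liftInj e₁ e₂ hu1 hv1 hu2 hv2 hne, ⟨w, hwS⟩,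
          Sym2.mem_attachWith' _ hw1 hwS, Sym2.mem_attachWith' _ hw2 hwS⟩)
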